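/- Let H be an atomic monoid, T the set of non-prime atoms of H_red. The monoid of relations M_H is a Krull monoid whose class group is isomorphic to the quotient group q([T]) of the submonoid of H_red generated by T, and the set of classes containing prime divisors is {[v], [v]^{-1} : v ∈ T} ∪ {1} if H_red has at least one prime element, and {[v], [v]^{-1} : v ∈ T} otherwise. In particular, the set of classes containing primes is finite if and only if T is finite. -/
import Mathlib


open Multiset
open scoped Classical ENNReal

/-- The set of atoms (irreducible elements) of a reduced monoid `M`. -/
abbrev Atom (M : Type) [CancelCommMonoid M] : Type := {u : M // Irreducible u}

/-- The factorization homomorphism `π : Z(H) → H`, where the factorization monoid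
`Z(H)` is realized as the free commutative monoid (multiset) over the atoms. -/
def fprod {M : Type} [CancelCommMonoid M] (z : Multiset (Atom M)) : M :=
  (z.map Subtype.val).prod

/-- The set of factorizations `Z(a)` of `a`. -/
def Zf {M : Type} [CancelCommMonoid M] (a : M) : Set (Multiset (Atom M)) :=
  {z | fprod z = a}

/-- `M` is reduced: the only unit is `1`. -/
def Reduced (M : Type) [CancelCommMonoid M] : Prop := ∀ u : M, IsUnit u → u = 1

/-- `M` is atomic: every non-unit is a product of atoms. -/
def Atomic (M : Type) [CancelCommMonoid M] : Prop :=
  ∀ a : M, ¬ IsUnit a → ∃ z : Multiset (Atom M), fprod z = a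

/-- The distance between two factorizations. -/
noncomputable def fdist {M : Type} [CancelCommMonoid M] (z z' : Multiset (Atom M)) : ℕ :=
  max (card (z - z')) (card (z' - z))

/-- The catenary degree `c(a)`: the least `N` such that any two factorizations of `a`
can be concatenated by an `N`-chain of factorizations of `a`. -/
noncomputable def cat {M : Type} [CancelCommMonoid M] (a : M) : ℕ∞ :=
  sInf {N : ℕ∞ | ∀ z ∈ Zf a, ∀ z' ∈ Zf a,
    Relation.ReflTransGen (fun u v => v ∈ Zf a ∧ (fdist u v : ℕ∞) ≤ N) z z'}

/-- The catenary degree `c(H)`. -/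
noncomputable def catH (M : Type) [CancelCommMonoid M] : ℕ∞ := ⨆ a : M, cat a

/-- The `R`-relation on factorizations of `a`: two factorizations are `R`-related if
they can be joined by a chain of factorizations of `a` whose consecutive members have a
common atom (the degenerate case `z = z' = 1` is the reflexivity case). -/
def RRel {M : Type} [CancelCommMonoid M] (a : M) :
    Multiset (Atom M) → Multiset (Atom M) → Prop :=
  Relation.ReflTransGen (fun u v => u ∈ Zf a ∧ v ∈ Zf a ∧ u ∩ v ≠ 0)

/-- `|R_a| ≥ 2`: `a` has at least two `R`-equivalence classes of factorizations. -/
def TwoClasses {M : Type} [CancelCommMonoid M] (a : M) : Prop :=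
  ∃ z ∈ Zf a, ∃ z' ∈ Zf a, ¬ RRel a z z'

/-- `μ(a)`: the supremum over the `R`-classes `ρ` of `Z(a)` of `min {|z| : z ∈ ρ}`. -/
noncomputable def mu {M : Type} [CancelCommMonoid M] (a : M) : ℕ∞ :=
  ⨆ z ∈ Zf a, ⨅ w ∈ {w | w ∈ Zf a ∧ RRel a z w}, (card w : ℕ∞)

/-- `μ(H) = sup {μ(a) : a ∈ H, |R_a| ≥ 2}`. -/
noncomputable def muH (M : Type) [CancelCommMonoid M] : ℕ∞ :=
  ⨆ a : M, ⨆ (_ : TwoClasses a), mu a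

/-- The monoid of relations `M_H ⊆ Z(H) × Z(H)`. -/
def MHset (M : Type) [CancelCommMonoid M] :
    Set (Multiset (Atom M) × Multiset (Atom M)) :=
  {p | fprod p.1 = fprod p.2}

/-- Atoms of the (reduced) monoid of relations `M_H`. -/
def IsRelAtom {M : Type} [CancelCommMonoid M]
    (p : Multiset (Atom M) × Multiset (Atom M)) : Prop :=
  p ∈ MHset M ∧ p ≠ 0 ∧
    ∀ q r, q ∈ MHset M → r ∈ MHset M → p = q + r → q = 0 ∨ r = 0

/-- An atom of (the reduced monoid) `M` which is a prime element. -/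
def IsPrimeAtom {M : Type} [CancelCommMonoid M] (u : Atom M) : Prop :=
  ∀ a b : M, u.1 ∣ a * b → u.1 ∣ a ∨ u.1 ∣ b

/-- The set `T` of non-prime atoms, as a subtype. -/
abbrev Tt (M : Type) [CancelCommMonoid M] : Type := {u : Atom M // ¬ IsPrimeAtom u}

/-- The set `P` of prime atoms, as a subtype. -/
abbrev Pt (M : Type) [CancelCommMonoid M] : Type := {u : Atom M // IsPrimeAtom u}

/-- The basis elements (prime divisors) of the free monoid `F(P) × F(T) × F(T)`. -/
def IsBasisEl {M : Type} [CancelCommMonoid M]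
    (e : Multiset (Pt M) × Multiset (Tt M) × Multiset (Tt M)) : Prop :=
  (∃ p, e = ({p}, 0, 0)) ∨ (∃ t, e = (0, {t}, 0)) ∨ (∃ t, e = (0, 0, {t}))

/-- The embedding of `F(P) × F(T) × F(T)` back into `Z(H) × Z(H)`,
`(q, x, y) ↦ (qx, qy)`. -/
def iotaF {M : Type} [CancelCommMonoid M]
    (f : Multiset (Pt M) × Multiset (Tt M) × Multiset (Tt M)) :
    Multiset (Atom M) × Multiset (Atom M) :=
  (f.1.map Subtype.val + f.2.1.map Subtype.val, f.1.map Subtype.val + f.2.2.map Subtype.val)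

/-- The congruence on `F(P) × F(T) × F(T)` defining the class group of `M_H` under the
divisor theory `φ`: two elements are equivalent iff they differ (in the quotient group)
by an element of `q(φ(M_H))`.  The quotient `Quot clsRel` is the class group of `M_H`. -/
def clsRel {M : Type} [CancelCommMonoid M]
    (f g : Multiset (Pt M) × Multiset (Tt M) × Multiset (Tt M)) : Prop :=
  ∃ a b, a ∈ MHset M ∧ b ∈ MHset M ∧ iotaF f + a = iotaF g + b

/-- The congruence realizing the quotient group `q([T])` of the submonoid of `H`
generated by `T`: pairs `(x, y)` (representing fractions `π(x)π(y)⁻¹`) are equivalent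
iff the corresponding fractions agree in `q(H)`.  `Quot qTRel` is `q([T])`. -/
def qTRel {M : Type} [CancelCommMonoid M]
    (x y : Multiset (Tt M) × Multiset (Tt M)) : Prop :=
  fprod (x.1.map Subtype.val + y.2.map Subtype.val) =
    fprod (y.1.map Subtype.val + x.2.map Subtype.val)

section Aux
variable {M : Type} [CancelCommMonoid M]

theorem fprod_add (x y : Multiset (Atom M)) : fprod (x + y) = fprod x * fprod y := by
  simp [fprod]

theorem qTRel_equivalence : Equivalence (qTRel (M := M)) := by
  constructor
  · intro x; rfl
  · intro x y h; exact h.symm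
  · intro x y z hxy hyz
    unfold qTRel at *
    apply mul_left_cancel (a := fprod (y.1.map Subtype.val) * fprod (y.2.map Subtype.val))
    have h3 : fprod (x.1.map Subtype.val + y.2.map Subtype.val) *
        fprod (y.1.map Subtype.val + z.2.map Subtype.val) =
        fprod (y.1.map Subtype.val + x.2.map Subtype.val) *
        fprod (z.1.map Subtype.val + y.2.map Subtype.val) := by rw [hxy, hyz]
    simp only [fprod_add] at h3 ⊢
    calc fprod (y.1.map Subtype.val) * fprod (y.2.map Subtype.val) *
          (fprod (x.1.map Subtype.val) * fprod (z.2.map Subtype.val))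
        = fprod (x.1.map Subtype.val) * fprod (y.2.map Subtype.val) *
          (fprod (y.1.map Subtype.val) * fprod (z.2.map Subtype.val)) := by
          simp only [mul_comm, mul_left_comm, mul_assoc]
      _ = fprod (y.1.map Subtype.val) * fprod (x.2.map Subtype.val) *
          (fprod (z.1.map Subtype.val) * fprod (y.2.map Subtype.val)) := h3
      _ = fprod (y.1.map Subtype.val) * fprod (y.2.map Subtype.val) *
          (fprod (z.1.map Subtype.val) * fprod (x.2.map Subtype.val)) := by
          simp only [mul_comm, mul_left_comm, mul_assoc]

theorem qTRel_of_mk_eq {a b : Multiset (Tt M) × Multiset (Tt M)}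
    (h : Quot.mk (qTRel (M := M)) a = Quot.mk _ b) : qTRel a b := by
  have := Quot.eq.mp h
  exact (qTRel_equivalence.eqvGen_iff).mp this

end Aux


section Aux2
variable {M : Type} [CancelCommMonoid M]

theorem cross_cancel {α : Type*} [CancelCommMonoid α] (Qf Qg Xf Xg Yf Yg A B : α)
    (e1 : Qf * Xf * A = Qg * Xg * B) (e2 : Qf * Yf * A = Qg * Yg * B) :
    Xf * Yg = Xg * Yf := by
  apply mul_left_cancel (a := Qf * Qg * A * B)
  calc Qf * Qg * A * B * (Xf * Yg) = (Qf * Xf * A) * (Qg * Yg * B) := by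
        simp only [mul_comm, mul_left_comm, mul_assoc]
    _ = (Qg * Xg * B) * (Qf * Yf * A) := by rw [e1, e2]
    _ = Qf * Qg * A * B * (Xg * Yf) := by
        simp only [mul_comm, mul_left_comm, mul_assoc]

theorem clsRel_to_qTRel {f g : Multiset (Pt M) × Multiset (Tt M) × Multiset (Tt M)}
    (h : clsRel f g) : qTRel f.2 g.2 := by
  obtain ⟨a, b, ha, hb, heq⟩ := h
  have h1 : f.1.map Subtype.val + f.2.1.map Subtype.val + a.1 =
      g.1.map Subtype.val + g.2.1.map Subtype.val + b.1 := congrArg Prod.fst heq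
  have h2 : f.1.map Subtype.val + f.2.2.map Subtype.val + a.2 =
      g.1.map Subtype.val + g.2.2.map Subtype.val + b.2 := congrArg Prod.snd heq
  have e1 := congrArg fprod h1
  have e2 := congrArg fprod h2
  simp only [fprod_add] at e1 e2
  rw [ha, hb] at e1
  unfold qTRel
  simp only [fprod_add]
  exact cross_cancel _ _ _ _ _ _ _ _ e1 e2

theorem qTRel_to_clsRel {x y : Multiset (Tt M) × Multiset (Tt M)} (h : qTRel x y) :
    clsRel ((0 : Multiset (Pt M)), x.1, x.2) ((0 : Multiset (Pt M)), y.1, y.2) := by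
  refine ⟨(y.1.map Subtype.val + y.2.map Subtype.val,
           y.1.map Subtype.val + y.2.map Subtype.val),
          (x.1.map Subtype.val + y.2.map Subtype.val,
           y.1.map Subtype.val + x.2.map Subtype.val), rfl, h, ?_⟩
  unfold iotaF
  ext : 1 <;> simp <;> abel

theorem clsRel_drop_fst (f : Multiset (Pt M) × Multiset (Tt M) × Multiset (Tt M)) :
    clsRel ((0 : Multiset (Pt M)), f.2.1, f.2.2) f := by
  refine ⟨(f.1.map Subtype.val, f.1.map Subtype.val), (0, 0), rfl, rfl, ?_⟩
  unfold iotaF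
  ext : 1 <;> simp <;> abel

end Aux2

/-- **Lemma 4.2.3.** `M_H` is a Krull monoid; its class group (the quotient of
`F(P) × F(T) × F(T)` by `q(φ(M_H))`) is isomorphic to `q([T])` via the natural map
`(q, x, y) ↦ π(x)π(y)⁻¹`; the set of classes containing prime divisors is
`{[v], [v]⁻¹ : v ∈ T} ∪ {1}` if `H` possesses a prime element and
`{[v], [v]⁻¹ : v ∈ T}` otherwise; and this set is finite iff `T` is finite. -/
theorem MHset_krull_classGroup (M : Type) [CancelCommMonoid M]
    (hred : Reduced M) (hat : Atomic M) :
    (∃ (ι : Type) (ψ : Multiset (Atom M) × Multiset (Atom M) → ι →₀ ℕ),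
      (∀ p ∈ MHset M, ∀ q ∈ MHset M, ψ (p + q) = ψ p + ψ q) ∧
      (∀ p ∈ MHset M, ∀ q ∈ MHset M, ψ p ≤ ψ q → ∃ r ∈ MHset M, p + r = q)) ∧
    (∃ e : Quot (clsRel (M := M)) ≃ Quot (qTRel (M := M)),
      ∀ f, e (Quot.mk _ f) = Quot.mk _ f.2) ∧
    ({c : Quot (qTRel (M := M)) | ∃ f, IsBasisEl f ∧ c = Quot.mk _ f.2} =
      {c : Quot (qTRel (M := M)) |
        (∃ t : Tt M, c = Quot.mk _ ({t}, 0) ∨ c = Quot.mk _ (0, {t})) ∨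
        ((∃ u : Atom M, IsPrimeAtom u) ∧ c = Quot.mk _ (0, 0))}) ∧
    ({c : Quot (qTRel (M := M)) | ∃ f, IsBasisEl f ∧ c = Quot.mk _ f.2}.Finite ↔
      Finite (Tt M)) := by
  have hset : ({c : Quot (qTRel (M := M)) | ∃ f, IsBasisEl f ∧ c = Quot.mk _ f.2} =
      {c : Quot (qTRel (M := M)) |
        (∃ t : Tt M, c = Quot.mk _ ({t}, 0) ∨ c = Quot.mk _ (0, {t})) ∨
        ((∃ u : Atom M, IsPrimeAtom u) ∧ c = Quot.mk _ (0, 0))}) := by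
    ext c
    simp only [Set.mem_setOf_eq]
    constructor
    · rintro ⟨f, hf, rfl⟩
      rcases hf with ⟨p, rfl⟩ | ⟨t, rfl⟩ | ⟨t, rfl⟩
      · exact Or.inr ⟨⟨p.1, p.2⟩, rfl⟩
      · exact Or.inl ⟨t, Or.inl rfl⟩
      · exact Or.inl ⟨t, Or.inr rfl⟩
    · rintro (⟨t, rfl | rfl⟩ | ⟨⟨u, hu⟩, rfl⟩)
      · exact ⟨(0, {t}, 0), Or.inr (Or.inl ⟨t, rfl⟩), rfl⟩
      · exact ⟨(0, 0, {t}), Or.inr (Or.inr ⟨t, rfl⟩), rfl⟩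
      · exact ⟨({⟨u, hu⟩}, 0, 0), Or.inl ⟨⟨u, hu⟩, rfl⟩, rfl⟩
  refine ⟨?_, ?_, hset, ?_⟩
  · -- Krull: divisor homomorphism into a free monoid
    refine ⟨Atom M ⊕ Atom M,
      fun p => Multiset.toFinsupp (p.1.map Sum.inl + p.2.map Sum.inr), ?_, ?_⟩
    · intro p _ q _
      simp only [Prod.fst_add, Prod.snd_add, Multiset.map_add, ← Multiset.toFinsupp_add]
      congr 1
      abel
    · intro p hp q hq hle
      replace hle := Finsupp.le_def.mp hle
      have h1 : p.1 ≤ q.1 := by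
        rw [Multiset.le_iff_count]
        intro a
        have := hle (Sum.inl a)
        simpa [Multiset.toFinsupp_apply, Multiset.count_map_eq_count' _ _ Sum.inl_injective,
          Multiset.count_eq_zero] using this
      have h2 : p.2 ≤ q.2 := by
        rw [Multiset.le_iff_count]
        intro a
        have := hle (Sum.inr a)
        simpa [Multiset.toFinsupp_apply, Multiset.count_map_eq_count' _ _ Sum.inr_injective,
          Multiset.count_eq_zero] using this
      refine ⟨(q.1 - p.1, q.2 - p.2), ?_, ?_⟩
      · have e1 : p.1 + (q.1 - p.1) = q.1 := add_tsub_cancel_of_le h1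
        have e2 : p.2 + (q.2 - p.2) = q.2 := add_tsub_cancel_of_le h2
        have : fprod p.1 * fprod (q.1 - p.1) = fprod p.2 * fprod (q.2 - p.2) := by
          rw [← fprod_add, ← fprod_add, e1, e2, hq]
        rw [hp] at this
        exact mul_left_cancel this
      · ext : 1
        · exact add_tsub_cancel_of_le h1
        · exact add_tsub_cancel_of_le h2
  · -- the class group isomorphism
    refine ⟨⟨Quot.lift (fun f => Quot.mk _ f.2) (fun f g h => Quot.sound (clsRel_to_qTRel h)),
      Quot.lift (fun x => Quot.mk _ ((0 : Multiset (Pt M)), x.1, x.2))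
        (fun x y h => Quot.sound (qTRel_to_clsRel h)), ?_, ?_⟩, fun f => rfl⟩
    · intro q
      induction q using Quot.ind with
      | _ f => exact Quot.sound (clsRel_drop_fst f)
    · intro q
      induction q using Quot.ind with
      | _ x => rfl
  · -- finiteness criterion
    constructor
    · intro hfin
      haveI := hfin.to_subtype
      refine Finite.of_injective (fun t : Tt M =>
        (⟨Quot.mk _ (({t} : Multiset (Tt M)), (0 : Multiset (Tt M))),
          ⟨(0, {t}, 0), Or.inr (Or.inl ⟨t, rfl⟩), rfl⟩⟩ :
          {c : Quot (qTRel (M := M)) | ∃ f, IsBasisEl f ∧ c = Quot.mk _ f.2})) ?_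
      intro t t' h
      have h2 : Quot.mk (qTRel (M := M)) ({t}, 0) = Quot.mk _ ({t'}, 0) :=
        congrArg Subtype.val h
      have h3 := qTRel_of_mk_eq h2
      unfold qTRel at h3
      simp [fprod] at h3
      exact Subtype.ext (Subtype.ext h3)
    · intro hfin
      rw [hset]
      have hsub : {c : Quot (qTRel (M := M)) |
          (∃ t : Tt M, c = Quot.mk _ ({t}, 0) ∨ c = Quot.mk _ (0, {t})) ∨
          ((∃ u : Atom M, IsPrimeAtom u) ∧ c = Quot.mk _ (0, 0))} ⊆
          (Set.range (fun t : Tt M => Quot.mk (qTRel (M := M)) ({t}, 0)) ∪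
           Set.range (fun t : Tt M => Quot.mk (qTRel (M := M)) (0, {t}))) ∪
          {Quot.mk (qTRel (M := M)) (0, 0)} := by
        rintro c (⟨t, rfl | rfl⟩ | ⟨-, rfl⟩)
        · exact Or.inl (Or.inl ⟨t, rfl⟩)
        · exact Or.inl (Or.inr ⟨t, rfl⟩)
        · exact Or.inr rfl
      exact (((Set.finite_range _).union (Set.finite_range _)).union
        (Set.finite_singleton _)).subset hsub
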